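/- arXiv:1906.11370 — 2 statements merged into one kernel-verified Lean document; each statement's English description precedes it below -/
import Mathlib

section
/- For any biquaternion q with Q(q) = 1 and any minquats v, w, the transformation T_q(x) = q·x·conj(q*) preserves the symmetric bilinear form ⟨v,w⟩ := Sc(v·conj(w)): one has ⟨T_q(v), T_q(w)⟩ = ⟨v,w⟩. -/
noncomputable section

/-- Euclidean inner product on ℍ ≅ ℝ⁴. -/
def dotQ (p q : Quaternion ℝ) : ℝ := p.re*q.re + p.imI*q.imI + p.imJ*q.imJ + p.imK*q.imK

/-- Euclidean inner product of vector parts (ℝ³). -/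
def dotV (p q : Quaternion ℝ) : ℝ := p.imI*q.imI + p.imJ*q.imJ + p.imK*q.imK

/-- Embedding of the real quaternions into the biquaternions ℍ(ℂ). -/
def toC (a : Quaternion ℝ) : Quaternion ℂ := ⟨(a.re : ℂ), a.imI, a.imJ, a.imK⟩

/-- The central imaginary unit i of the biquaternions. -/
def qI : Quaternion ℂ := ((Complex.I : ℂ) : Quaternion ℂ)

/-- The biquaternion α + iβ determined by two real quaternions. -/
def bq (a b : Quaternion ℝ) : Quaternion ℂ := toC a + qI * toC b

/-- The involution * : complex conjugation of the coefficients. -/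
def cstar (q : Quaternion ℂ) : Quaternion ℂ :=
  ⟨starRingEnd ℂ q.re, starRingEnd ℂ q.imI, starRingEnd ℂ q.imJ, starRingEnd ℂ q.imK⟩

/-- The minquat v₀ + i·w with v₀ ∈ ℝ and w a (pure) real quaternion. -/
def mq (v₀ : ℝ) (w : Quaternion ℝ) : Quaternion ℂ := ((v₀ : ℂ) : Quaternion ℂ) + qI * toC w

/-- The action T_q(v) = q·v·conj(q*). (`star` is quaternionic conjugation.) -/
def Tq (q v : Quaternion ℂ) : Quaternion ℂ := q * v * star (cstar q)

lemma cstar_mul (a b : Quaternion ℂ) : cstar (a * b) = cstar a * cstar b := by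
  ext <;> simp only [Quaternion.re_mul, Quaternion.imI_mul, Quaternion.imJ_mul,
    Quaternion.imK_mul] <;> simp [cstar, map_add, map_sub, map_mul]

lemma cstar_star (a : Quaternion ℂ) : cstar (star a) = star (cstar a) := by
  ext <;> simp only [Quaternion.re_star, Quaternion.imI_star, Quaternion.imJ_star,
    Quaternion.imK_star] <;> simp [cstar]

lemma cstar_one : cstar 1 = 1 := by
  ext <;> simp [cstar, Quaternion.re_one, Quaternion.imI_one, Quaternion.imJ_one,
    Quaternion.imK_one]

lemma re_mul_comm (a b : Quaternion ℂ) : (a * b).re = (b * a).re := by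
  simp [Quaternion.re_mul]; ring

/-- T_q preserves the bilinear form ⟨v,w⟩ = Sc(v·conj(w)) on minquats. -/
theorem Tq_preserves_bilinear_form (q : Quaternion ℂ) (hq : q * star q = 1)
    (v₀ : ℝ) (v : Quaternion ℝ) (hv : v.re = 0)
    (w₀ : ℝ) (w : Quaternion ℝ) (hw : w.re = 0) :
    (Tq q (mq v₀ v) * star (Tq q (mq w₀ w))).re = (mq v₀ v * star (mq w₀ w)).re := by
  have h2 : star q * q = 1 := by
    rw [Quaternion.star_mul_self, ← Quaternion.self_mul_star, hq]
  have h3 : star (cstar q) * cstar q = 1 := by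
    rw [← cstar_star, ← cstar_mul, h2, cstar_one]
  set V := mq v₀ v
  set W := mq w₀ w
  have key : Tq q V * star (Tq q W)
      = q * (V * (star (cstar q) * cstar q) * star W) * star q := by
    simp only [Tq, star_mul, star_star]
    noncomm_ring
  rw [key, h3, mul_one, re_mul_comm, ← mul_assoc, h2, one_mul]
end
end

section
/- For split biquaternions: let q_b = cos(φ/2) + j·u·sin(φ/2) with u a unit pure real quaternion, and v = v₀ + j·w with v₀ ∈ ℝ and w a pure real quaternion. Then T_{q_b}(v) = q_b·v·q_b = v₀' + j·w' with v₀' = v₀cos(φ) − ⟨w,u⟩sin(φ) and w' = w − 2⟨w,u⟩sin²(φ/2)·u + v₀sin(φ)·u; in particular T_{q_b} preserves the Euclidean norm v₀² + |w|² on ℝ⁴. -/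
noncomputable section

/-- The split numbers 𝕊 = ℝ[j]/(j²−1), realized as ℝ × ℝ (with j = (1,-1)). -/
abbrev SplitNum := ℝ × ℝ

/-- Embedding of the real quaternions into the split biquaternions ℍ(𝕊). -/
def toS (a : Quaternion ℝ) : Quaternion SplitNum :=
  ⟨(a.re, a.re), (a.imI, a.imI), (a.imJ, a.imJ), (a.imK, a.imK)⟩

/-- The central unit j of the split biquaternions, j² = 1. -/
def jS : Quaternion SplitNum := (((1, -1) : SplitNum) : Quaternion SplitNum)

/-- The split biquaternion α + jβ determined by two real quaternions. -/
def bqS (a b : Quaternion ℝ) : Quaternion SplitNum := toS a + jS * toS b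

/-- The element v₀ + j·w with v₀ ∈ ℝ, w a real quaternion. -/
def mqS (v₀ : ℝ) (w : Quaternion ℝ) : Quaternion SplitNum :=
  toS ((v₀ : Quaternion ℝ)) + jS * toS w

set_option maxHeartbeats 1000000

lemma toS_re (a : Quaternion ℝ) : (toS a).re = (a.re, a.re) := rfl
lemma toS_imI (a : Quaternion ℝ) : (toS a).imI = (a.imI, a.imI) := rfl
lemma toS_imJ (a : Quaternion ℝ) : (toS a).imJ = (a.imJ, a.imJ) := rfl
lemma toS_imK (a : Quaternion ℝ) : (toS a).imK = (a.imK, a.imK) := rfl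

lemma bq_mul (a b c d : Quaternion ℝ) :
    bqS a b * bqS c d = bqS (a*c + b*d) (a*d + b*c) := by
  ext <;>
  simp only [bqS, toS_re, toS_imI, toS_imJ, toS_imK, jS, Quaternion.re_mul, Quaternion.imI_mul, Quaternion.imJ_mul,
    Quaternion.imK_mul, Quaternion.re_add, Quaternion.imI_add, Quaternion.imJ_add,
    Quaternion.imK_add, Quaternion.re_coe, Quaternion.imI_coe, Quaternion.imJ_coe,
    Quaternion.imK_coe] <;>
  simp only [Prod.fst_add, Prod.fst_mul, Prod.snd_add, Prod.snd_mul, Prod.fst_neg, Prod.snd_neg,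
    Prod.fst_sub, Prod.snd_sub, Prod.mk_mul_mk, Prod.mk_add_mk, Prod.fst_zero, Prod.snd_zero,
    Prod.fst_one, Prod.snd_one] <;>
  ring

lemma mq_eq (v₀ : ℝ) (w : Quaternion ℝ) : mqS v₀ w = bqS ((v₀ : Quaternion ℝ)) w := rfl

/-- A unit split biquaternion q_b = cos(φ/2) + j·u·sin(φ/2) acts on v = v₀ + j·w as a
    simple rotation of ℝ⁴; in particular it preserves the Euclidean norm v₀² + |w|². -/
theorem simple_rotation_formula (φ v₀ : ℝ) (u w : Quaternion ℝ)
    (hu : u.re = 0) (hu1 : ‖u‖ = 1) (hw : w.re = 0) :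
    mqS (Real.cos (φ/2)) (Real.sin (φ/2) • u) * mqS v₀ w *
        mqS (Real.cos (φ/2)) (Real.sin (φ/2) • u) =
      mqS (v₀ * Real.cos φ - dotV w u * Real.sin φ)
        (w - (2 * dotV w u * Real.sin (φ/2) ^ 2) • u + (v₀ * Real.sin φ) • u) ∧
    (v₀ * Real.cos φ - dotV w u * Real.sin φ) ^ 2 +
        ‖w - (2 * dotV w u * Real.sin (φ/2) ^ 2) • u + (v₀ * Real.sin φ) • u‖ ^ 2 =
      v₀ ^ 2 + ‖w‖ ^ 2 := by
  have hK : u.imI^2 + u.imJ^2 + u.imK^2 = 1 := by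
    have h := Quaternion.normSq_eq_norm_mul_self u
    rw [hu1, Quaternion.normSq_def'] at h
    nlinarith [h]
  have hsc : Real.sin (φ/2)^2 + Real.cos (φ/2)^2 = 1 := Real.sin_sq_add_cos_sq _
  have hs2 : Real.sin φ = 2 * Real.sin (φ/2) * Real.cos (φ/2) := by
    have h := Real.sin_two_mul (φ/2)
    rw [show 2*(φ/2) = φ by ring] at h
    linarith
  have hc2 : Real.cos φ = Real.cos (φ/2)^2 - Real.sin (φ/2)^2 := by
    have h := Real.cos_two_mul' (φ/2)
    rw [show 2*(φ/2) = φ by ring] at h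
    linarith
  have hnorm : ∀ x : Quaternion ℝ, ‖x‖^2 = x.re^2 + x.imI^2 + x.imJ^2 + x.imK^2 := by
    intro x
    rw [sq, ← Quaternion.normSq_eq_norm_mul_self, Quaternion.normSq_def']
  constructor
  · simp only [mq_eq]
    rw [bq_mul, bq_mul, hs2, hc2]
    congr 1
    · apply Quaternion.ext <;>
      simp only [dotV, Quaternion.re_mul, Quaternion.imI_mul, Quaternion.imJ_mul,
        Quaternion.imK_mul, Quaternion.re_add, Quaternion.imI_add, Quaternion.imJ_add,
        Quaternion.imK_add, Quaternion.re_coe, Quaternion.imI_coe, Quaternion.imJ_coe,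
        Quaternion.imK_coe, Quaternion.re_smul, Quaternion.imI_smul, Quaternion.imJ_smul,
        Quaternion.imK_smul, smul_eq_mul, hu, hw] <;>
      first
        | ring1
        | linear_combination (-(Real.sin (φ/2)^2*v₀))*hK
    · apply Quaternion.ext <;>
      simp only [dotV, Quaternion.re_mul, Quaternion.imI_mul, Quaternion.imJ_mul,
        Quaternion.imK_mul, Quaternion.re_add, Quaternion.imI_add, Quaternion.imJ_add,
        Quaternion.imK_add, Quaternion.re_sub, Quaternion.imI_sub, Quaternion.imJ_sub,
        Quaternion.imK_sub, Quaternion.re_coe, Quaternion.imI_coe, Quaternion.imJ_coe,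
        Quaternion.imK_coe, Quaternion.re_smul, Quaternion.imI_smul, Quaternion.imJ_smul,
        Quaternion.imK_smul, smul_eq_mul, hu, hw] <;>
      first
        | ring1
        | linear_combination (Real.sin (φ/2)^2*w.imI)*hK + w.imI*hsc
        | linear_combination (Real.sin (φ/2)^2*w.imJ)*hK + w.imJ*hsc
        | linear_combination (Real.sin (φ/2)^2*w.imK)*hK + w.imK*hsc
  · rw [hnorm, hnorm, hs2, hc2]
    simp only [dotV, Quaternion.re_add, Quaternion.imI_add, Quaternion.imJ_add, Quaternion.imK_add,
      Quaternion.re_sub, Quaternion.imI_sub, Quaternion.imJ_sub, Quaternion.imK_sub,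
      Quaternion.re_smul, Quaternion.imI_smul, Quaternion.imJ_smul, Quaternion.imK_smul,
      smul_eq_mul, hu, hw]
    set d := w.imI*u.imI + w.imJ*u.imJ + w.imK*u.imK with hd
    linear_combination ((v₀*(2*Real.sin (φ/2)*Real.cos (φ/2)) - 2*d*Real.sin (φ/2)^2)^2)*hK +
      (v₀^2*(Real.sin (φ/2)^2+Real.cos (φ/2)^2+1) + 4*Real.sin (φ/2)^2*d^2 - 4*v₀*Real.sin (φ/2)*Real.cos (φ/2)*d)*hsc
end
end
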